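/- Let 𝒩 be a nest of subsets of {1,...,s}, i.e., a collection of subsets of cardinality at least 2 such that any two members are either disjoint or nested. Then there exists a forest structure ≺ on {1,...,s} covering 𝒩: a partial order in which every element has at most one immediate predecessor (parent), such that every N ∈ 𝒩 is a ≺-subtree, and for every k ∈ {1,...,s}, the descendant set T_{⪯k} = {j : j ⪯ k} belongs to 𝒩 if and only if k has at least one child. -/

import Mathlib

/-- every nest `𝒩` of subsets of `{1, ..., s}` (members of cardinality `≥ 2`,
any two members disjoint or nested) is covered by a forest: there is a strict partial order
`r` on `Fin s` in which every element has at most one immediate successor (parent), every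
`N ∈ 𝒩` is an `r`-subtree, and for every `k` the descendant set `{j | j ⪯ k}` lies in `𝒩`
if and only if `k` has at least one child. -/
theorem exists_covering_forest (s : ℕ) (𝒩 : Set (Set (Fin s)))
    (hcard : ∀ N ∈ 𝒩, 2 ≤ N.ncard)
    (hnest : ∀ A ∈ 𝒩, ∀ B ∈ 𝒩, (A ∩ B).Nonempty → A ⊆ B ∨ B ⊆ A) :
    ∃ r : Fin s → Fin s → Prop,
      IsStrictOrder (Fin s) r ∧
      -- every element has at most one parent (immediate successor)
      (∀ k k₁ k₂ : Fin s, (r k k₁ ∧ ¬ ∃ l, r k l ∧ r l k₁) →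
        (r k k₂ ∧ ¬ ∃ l, r k l ∧ r l k₂) → k₁ = k₂) ∧
      -- every member of the nest is an `r`-subtree
      (∀ N ∈ 𝒩,
        (∀ k₁ ∈ N, ∀ k₂ ∈ N, ∀ k₀, r k₁ k₀ → r k₀ k₂ → k₀ ∈ N) ∧
        (∀ k₁ ∈ N, ∀ k₂ ∈ N, ∃ q ∈ N, (r k₁ q ∨ k₁ = q) ∧ (r k₂ q ∨ k₂ = q))) ∧
      -- descendant sets in the nest correspond exactly to elements with a child
      (∀ k : Fin s,
        {j | r j k ∨ j = k} ∈ 𝒩 ↔ ∃ j, r j k ∧ ¬ ∃ l, r j l ∧ r l k) := by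
  classical
  set r : Fin s → Fin s → Prop :=
    fun a b => a ≠ b ∧ ∃ N ∈ 𝒩, a ∈ N ∧ IsGreatest N b with hrdef
  have hlt : ∀ a b, r a b → a < b := by
    rintro a b ⟨hne, N, _, haN, hgb⟩
    exact lt_of_le_of_ne (hgb.2 haN) hne
  have htrans : ∀ a b c, r a b → r b c → r a c := by
    rintro a b c ⟨hab, N, hN, haN, hgN⟩ hbc
    obtain ⟨hbc', M, hM, hbM, hgM⟩ := hbc
    have h1 : a < b := hlt a b ⟨hab, N, hN, haN, hgN⟩
    have h2 : b < c := hlt b c ⟨hbc', M, hM, hbM, hgM⟩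
    refine ⟨(h1.trans h2).ne, ?_⟩
    rcases hnest N hN M hM ⟨b, hgN.1, hbM⟩ with h | h
    · exact ⟨M, hM, h haN, hgM⟩
    · exact absurd (hgN.2 (h hgM.1)) (not_le.mpr h2)
  refine ⟨r, { irrefl := fun a ha => ha.1 rfl, toIsTrans := ⟨htrans⟩ }, ?_, ?_, ?_⟩
  · -- at most one parent
    rintro k k₁ k₂ ⟨h1, h1n⟩ ⟨h2, h2n⟩
    by_contra hne
    obtain ⟨hk1, N₁, hN₁, hkN₁, hg₁⟩ := h1
    obtain ⟨hk2, N₂, hN₂, hkN₂, hg₂⟩ := h2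
    rcases hnest N₁ hN₁ N₂ hN₂ ⟨k, hkN₁, hkN₂⟩ with h | h
    · exact h2n ⟨k₁, ⟨hk1, N₁, hN₁, hkN₁, hg₁⟩, hne, N₂, hN₂, h hg₁.1, hg₂⟩
    · exact h1n ⟨k₂, ⟨hk2, N₂, hN₂, hkN₂, hg₂⟩,
        fun e => hne e.symm, N₁, hN₁, h hg₂.1, hg₁⟩
  · -- every member of the nest is a subtree
    intro N hN
    have hfin : N.Finite := N.toFinite
    have hne : N.Nonempty := by
      rcases N.eq_empty_or_nonempty with h | h
      · exfalso; have := hcard N hN; simp [h] at this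
      · exact h
    obtain ⟨m, hmN, hmax⟩ := Set.exists_max_image N id hfin hne
    have hgm : IsGreatest N m := ⟨hmN, hmax⟩
    constructor
    · rintro k₁ hk₁ k₂ hk₂ k₀ ⟨hne1, P, hP, hk1P, hgP⟩ hr2
      rcases hnest P hP N hN ⟨k₁, hk1P, hk₁⟩ with h | h
      · exact h hgP.1
      · exact absurd (hgP.2 (h hk₂)) (not_le.mpr (hlt _ _ hr2))
    · intro k₁ hk₁ k₂ hk₂
      refine ⟨m, hmN, ?_, ?_⟩
      · by_cases h : k₁ = m
        · exact Or.inr h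
        · exact Or.inl ⟨h, N, hN, hk₁, hgm⟩
      · by_cases h : k₂ = m
        · exact Or.inr h
        · exact Or.inl ⟨h, N, hN, hk₂, hgm⟩
  · -- descendant sets
    intro k
    constructor
    · intro hD
      have h2 : 1 < {j | r j k ∨ j = k}.ncard := lt_of_lt_of_le one_lt_two (hcard _ hD)
      obtain ⟨j₀, hj₀, hj₀k⟩ := Set.exists_ne_of_one_lt_ncard h2 k
      have hj₀r : r j₀ k := by
        rcases hj₀ with h | h
        · exact h
        · exact absurd h hj₀k
      -- pick a maximal child
      have hSfin : {j | r j k}.Finite := Set.toFinite _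
      have hSne : {j | r j k}.Nonempty := ⟨j₀, hj₀r⟩
      obtain ⟨j, hj, hjmax⟩ := Set.exists_max_image {j | r j k} id hSfin hSne
      refine ⟨j, hj, ?_⟩
      rintro ⟨l, hjl, hlk⟩
      exact absurd (hjmax l hlk) (not_le.mpr (hlt _ _ hjl))
    · rintro ⟨j, hjk, -⟩
      obtain ⟨hne, N₀, hN₀, hjN₀, hg₀⟩ := hjk
      set C : Set (Set (Fin s)) := {N ∈ 𝒩 | IsGreatest N k} with hCdef
      have hCfin : C.Finite := Set.toFinite C
      have hCne : C.Nonempty := ⟨N₀, hN₀, hg₀⟩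
      obtain ⟨Nstar, hNstarC, hmax⟩ := Set.Finite.exists_maximalFor id C hCfin hCne
      obtain ⟨hNs𝒩, hNsg⟩ := hNstarC
      have hall : ∀ N' ∈ C, N' ⊆ Nstar := by
        rintro N' ⟨hN', hg'⟩
        rcases hnest N' hN' Nstar hNs𝒩 ⟨k, hg'.1, hNsg.1⟩ with h | h
        · exact h
        · have := hmax (j := N') ⟨hN', hg'⟩ h
          simp only [id] at this
          exact this
      have hDeq : {j | r j k ∨ j = k} = Nstar := by
        ext x
        constructor
        · rintro (⟨hxne, N, hN, hxN, hg⟩ | rfl)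
          · exact hall N ⟨hN, hg⟩ hxN
          · exact hNsg.1
        · intro hx
          by_cases h : x = k
          · exact Or.inr h
          · exact Or.inl ⟨h, Nstar, hNs𝒩, hx, hNsg⟩
      rw [hDeq]
      exact hNs𝒩
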